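/- If Γ is a finite connected graph with n edges and cycle rank ℓ, then the set A ⊂ ℤ^{n+1} consisting of the points (1, S⃗) for S the complement of a spanning tree and (0, T⃗) for T a monomial of the second Symanzik polynomial with mass terms (i.e., T⃗ = S⃗ + e_i for some spanning-tree complement S and edge i, together with cut monomials) lies on the affine hyperplane Σ_{i=0}^{n} x_i = ℓ + 1, and A generates the sublattice L = {x ∈ ℤ^{n+1} : (ℓ+1) | Σᵢ x_i}, which has index ℓ+1 in ℤ^{n+1}. -/

import Mathlib

open scoped Classical

/-- A finite multigraph on vertex type `V` with edge type `E` is given by an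
endpoint map `G : E → Sym2 V`. -/
structure Subgraph {V E : Type} [Fintype V] [Fintype E] [DecidableEq V] [DecidableEq E]
    (G : E → Sym2 V) where
  verts : Finset V
  edges : Finset E
  incl : ∀ e ∈ edges, ∀ v ∈ G e, v ∈ verts

variable {V E : Type} [Fintype V] [Fintype E] [DecidableEq V] [DecidableEq E]

/-- Number of connected components of a subgraph. -/
noncomputable def comps (G : E → Sym2 V) (H : Subgraph G) : ℕ :=
  Nat.card (Quot fun a b : {v : V // v ∈ H.verts} => ∃ e ∈ H.edges, G e = s(a.1, b.1))

/-- Cycle rank (first Betti number) `ℓ(H) = |E(H)| - |V(H)| + c(H)`. -/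
noncomputable def cycleRank (G : E → Sym2 V) (H : Subgraph G) : ℤ :=
  (H.edges.card : ℤ) - (H.verts.card : ℤ) + (comps G H : ℤ)

/-- The spanning subgraph with all vertices and edge set `S`. -/
def spanningSub (G : E → Sym2 V) (S : Finset E) : Subgraph G where
  verts := Finset.univ
  edges := S
  incl := fun _ _ v _ => Finset.mem_univ v

/-- `T` is (the edge set of) a spanning tree of `G`. -/
noncomputable def IsSpanningTree (G : E → Sym2 V) (T : Finset E) : Prop :=
  T.card + 1 = Fintype.card V ∧ comps G (spanningSub G T) = 1

/-- The graph `G` is connected. -/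
noncomputable def GraphConnected (G : E → Sym2 V) : Prop :=
  comps G (spanningSub G Finset.univ) = 1

/-- Real incidence vector of a set of edges. -/
def ind (S : Finset E) : E → ℝ := fun e => if e ∈ S then 1 else 0

/-- Integer incidence vector of a set of edges. -/
def indZ (S : Finset E) : E → ℤ := fun e => if e ∈ S then 1 else 0

/-- `C` is a cut of `G`: its complement is a spanning forest with exactly two
components (removing `C` disconnects the graph into two trees). -/
noncomputable def IsCut (G : E → Sym2 V) (C : Finset E) : Prop :=
  (Cᶜ).card + 2 = Fintype.card V ∧ comps G (spanningSub G Cᶜ) = 2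

/-- The set `A ⊂ ℤ^{n+1}` of exponent vectors: `(1, S⃗)` for complements `S` of spanning
trees (monomials of the first Symanzik polynomial) and `(0, T⃗)` for monomials of the
second Symanzik polynomial with mass terms, i.e. `T⃗ = S⃗ + e_i` (mass monomials) and
`T⃗ = 1_C` for cuts `C`. -/
noncomputable def symanzikPoints (G : E → Sym2 V) : Set (ℤ × (E → ℤ)) :=
  {p | ∃ T, IsSpanningTree G T ∧ p = (1, indZ Tᶜ)} ∪
  {p | ∃ T i, IsSpanningTree G T ∧ p = (0, indZ Tᶜ + Pi.single i 1)} ∪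
  {p | ∃ C, IsCut G C ∧ p = (0, indZ C)}

set_option linter.unusedSectionVars false

private def rel' (G : E → Sym2 V) (S : Finset E) (a b : V) : Prop := ∃ e ∈ S, G e = s(a, b)

private lemma card_quot_insert (G : E → Sym2 V) (T : Finset E) (e : E) (a b : V)
    (hab : G e = s(a, b)) (hnr : ¬ Relation.EqvGen (rel' G T) a b) :
    Nat.card (Quot (rel' G (insert e T))) + 1 = Nat.card (Quot (rel' G T)) := by
  set β : Quot (rel' G T) := Quot.mk _ b with hβ
  have hαβ : Quot.mk (rel' G T) a ≠ β := fun h => hnr (Quot.eq.mp h)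
  -- map on the T-quotient
  set fQ : Quot (rel' G T) → {q : Quot (rel' G T) // q ≠ β} :=
    fun q => if h : q = β then ⟨Quot.mk _ a, hαβ⟩ else ⟨q, h⟩ with hfQ
  have hf : ∀ x y, rel' G (insert e T) x y →
      fQ (Quot.mk (rel' G T) x) = fQ (Quot.mk (rel' G T) y) := by
    rintro x y ⟨e', he', hG⟩
    rcases Finset.mem_insert.mp he' with rfl | he'T
    · rw [hab] at hG
      have hfa : fQ (Quot.mk (rel' G T) a) = ⟨Quot.mk _ a, hαβ⟩ := dif_neg hαβ
      have hfb : fQ β = ⟨Quot.mk _ a, hαβ⟩ := dif_pos rfl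
      rcases Sym2.eq_iff.mp hG with ⟨rfl, rfl⟩ | ⟨rfl, rfl⟩
      · rw [hfa, ← hβ, hfb]
      · rw [← hβ, hfb, hfa]
    · exact congrArg fQ (Quot.sound ⟨e', he'T, hG⟩)
  have key : Quot (rel' G (insert e T)) ≃ {q : Quot (rel' G T) // q ≠ β} := by
    refine ⟨Quot.lift (fun x => fQ (Quot.mk _ x)) hf,
      fun q => Quot.lift (Quot.mk (rel' G (insert e T)))
        (fun x y h => Quot.sound ⟨h.choose, Finset.mem_insert_of_mem h.choose_spec.1,
          h.choose_spec.2⟩) q.1, ?_, ?_⟩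
    · intro z
      induction z using Quot.ind with
      | _ x =>
        by_cases h : Quot.mk (rel' G T) x = β
        · simp only [Quot.lift_mk, hfQ, dif_pos h]
          have h1 : Quot.mk (rel' G (insert e T)) a = Quot.mk _ b :=
            Quot.sound ⟨e, Finset.mem_insert_self e T, hab⟩
          have h2 : Quot.mk (rel' G (insert e T)) x = Quot.mk _ b :=
            Quot.eq.mpr (Relation.EqvGen.mono
              (fun u v ⟨e', he', hG⟩ => ⟨e', Finset.mem_insert_of_mem he', hG⟩)
              _ _ (Quot.eq.mp h))
          simp [h1, h2]
        · simp only [Quot.lift_mk, hfQ, dif_neg h]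
    · rintro ⟨q, hq⟩
      induction q using Quot.ind with
      | _ x =>
        simp only [Quot.lift_mk, hfQ]
        exact Subtype.ext (by simp [dif_neg hq])
  rw [Nat.card_congr key]
  letI : Fintype (Quot (rel' G T)) := Fintype.ofFinite _
  rw [Nat.card_eq_fintype_card, Nat.card_eq_fintype_card]
  have h1 : Fintype.card {q : Quot (rel' G T) // q ≠ β} =
      Fintype.card (Quot (rel' G T)) - Fintype.card {q : Quot (rel' G T) // q = β} :=
    Fintype.card_subtype_compl _
  have h2 : Fintype.card {q : Quot (rel' G T) // q = β} = 1 := Fintype.card_subtype_eq β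
  have h3 : 0 < Fintype.card (Quot (rel' G T)) := @Fintype.card_pos _ _ ⟨β⟩
  omega

set_option linter.unusedSectionVars false

private lemma exists_tree_aux (G : E → Sym2 V) (S : Finset E)
    (hS : ∀ a b : V, Relation.EqvGen (rel' G S) a b) :
    ∀ c : ℕ, ∀ T : Finset E, T ⊆ S → Nat.card (Quot (rel' G T)) = c + 1 →
      ∃ T', T ⊆ T' ∧ T' ⊆ S ∧ Nat.card (Quot (rel' G T')) = 1 ∧ T'.card = T.card + c := by
  intro c
  induction c with
  | zero => exact fun T hTS h => ⟨T, subset_rfl, hTS, h, rfl⟩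
  | succ c ih =>
    intro T hTS hcard
    by_cases hall : ∀ e ∈ S, ∀ a b : V, G e = s(a, b) → Relation.EqvGen (rel' G T) a b
    · exfalso
      have hone : Nat.card (Quot (rel' G T)) = 1 := by
        rw [Nat.card_eq_one_iff_unique]
        constructor
        · constructor
          intro z w
          induction z using Quot.ind with
          | _ x =>
            induction w using Quot.ind with
            | _ y =>
              refine Quot.eq.mpr ?_
              have h1 : Relation.EqvGen (fun u v => Relation.EqvGen (rel' G T) u v) x y :=
                Relation.EqvGen.mono (fun u v ⟨e, he, hG⟩ => hall e he u v hG) _ _ (hS x y)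
              exact (Equivalence.eqvGen_iff (Relation.EqvGen.is_equivalence _)).mp h1
        · have : 0 < Nat.card (Quot (rel' G T)) := by omega
          exact (Nat.card_pos_iff.mp this).1
      omega
    · push_neg at hall
      obtain ⟨e, heS, a, b, hab, hnr⟩ := hall
      have heT : e ∉ T := fun heT => hnr (Relation.EqvGen.rel _ _ ⟨e, heT, hab⟩)
      have hdrop := card_quot_insert G T e a b hab hnr
      obtain ⟨T', hT1, hT2, hT3, hT4⟩ := ih (insert e T)
        (Finset.insert_subset heS hTS) (by omega)
      exact ⟨T', (Finset.subset_insert e T).trans hT1, hT2, hT3,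
        by rw [hT4, Finset.card_insert_of_notMem heT]; omega⟩

private lemma comps_spanning (G : E → Sym2 V) (S : Finset E) :
    comps G (spanningSub G S) = Nat.card (Quot (rel' G S)) :=
  Nat.card_congr (Quot.congr (Equiv.subtypeUnivEquiv fun v => Finset.mem_univ v)
    (fun _ _ => Iff.rfl))


private lemma exists_spanning_tree (G : E → Sym2 V) (hconn : GraphConnected G) :
    ∃ T : Finset E, IsSpanningTree G T := by
  have hcard : Nat.card (Quot (rel' G (Finset.univ : Finset E))) = 1 := by
    rw [← comps_spanning]; exact hconn
  have hne : Nonempty V := by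
    obtain ⟨q⟩ := (Nat.card_pos_iff.mp (by omega : 0 < Nat.card
      (Quot (rel' G (Finset.univ : Finset E))))).1
    induction q using Quot.ind with
    | _ x => exact ⟨x⟩
  have hsub : Subsingleton (Quot (rel' G (Finset.univ : Finset E))) :=
    (Nat.card_eq_one_iff_unique.mp hcard).1
  have hS : ∀ a b : V, Relation.EqvGen (rel' G (Finset.univ : Finset E)) a b := by
    intro a b
    exact Quot.eq.mp (hsub.allEq _ _)
  have hempty : Nat.card (Quot (rel' G (∅ : Finset E))) = Fintype.card V := by
    have : Quot (rel' G (∅ : Finset E)) ≃ V :=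
      ⟨Quot.lift id (fun x y ⟨e, he, _⟩ => absurd he (Finset.notMem_empty e)),
        Quot.mk _, fun z => by induction z using Quot.ind with | _ x => rfl, fun x => rfl⟩
    rw [Nat.card_congr this, Nat.card_eq_fintype_card]
  have hV : 0 < Fintype.card V := Fintype.card_pos
  obtain ⟨T, _, _, hT1, hTcard⟩ := exists_tree_aux G Finset.univ hS (Fintype.card V - 1)
    ∅ (Finset.empty_subset _) (by omega)
  refine ⟨T, ?_, ?_⟩
  · rw [hTcard, Finset.card_empty]; omega
  · rw [comps_spanning]; exact hT1

private lemma sum_indZ (S : Finset E) : ∑ e, indZ S e = (S.card : ℤ) := by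
  simp [indZ, Finset.sum_ite_mem, Finset.univ_inter]

private lemma tree_compl_card (G : E → Sym2 V) (hconn : GraphConnected G)
    {T : Finset E} (hT : IsSpanningTree G T) :
    ((Tᶜ : Finset E).card : ℤ) = cycleRank G (spanningSub G Finset.univ) := by
  have h1 : (Tᶜ : Finset E).card = Fintype.card E - T.card := Finset.card_compl T
  have h2 : T.card + 1 = Fintype.card V := hT.1
  have h3 : T.card ≤ Fintype.card E := Finset.card_le_univ T
  unfold GraphConnected at hconn
  unfold cycleRank
  rw [hconn]
  simp only [spanningSub, Finset.card_univ]
  push_cast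
  omega

private def sumHom : (ℤ × (E → ℤ)) →+ ℤ where
  toFun x := x.1 + ∑ e, x.2 e
  map_zero' := by simp
  map_add' x y := by
    simp only [Prod.fst_add, Prod.snd_add, Pi.add_apply, Finset.sum_add_distrib]
    ring

private lemma sumHom_apply (x : ℤ × (E → ℤ)) : sumHom x = x.1 + ∑ e, x.2 e := rfl

/-- The points of `A` lie on the hyperplane `∑ᵢ xᵢ = ℓ + 1`, the lattice they generate
is `L = {x : (ℓ+1) ∣ ∑ᵢ xᵢ}`, and this sublattice has index `ℓ + 1` in `ℤ^{n+1}`. -/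
theorem symanzik_lattice (G : E → Sym2 V) [Nonempty E] (hconn : GraphConnected G) :
    (∀ p ∈ symanzikPoints G,
        p.1 + ∑ e, p.2 e = cycleRank G (spanningSub G Finset.univ) + 1) ∧
    (∀ x : ℤ × (E → ℤ), x ∈ AddSubgroup.closure (symanzikPoints G) ↔
        (cycleRank G (spanningSub G Finset.univ) + 1) ∣ (x.1 + ∑ e, x.2 e)) ∧
    (AddSubgroup.closure (symanzikPoints G)).index =
      (cycleRank G (spanningSub G Finset.univ)).toNat + 1 := by
  obtain ⟨T, hT⟩ := exists_spanning_tree G hconn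
  set ℓ : ℤ := cycleRank G (spanningSub G Finset.univ) with hℓ
  have hℓT : ((Tᶜ : Finset E).card : ℤ) = ℓ := tree_compl_card G hconn hT
  have hℓ0 : 0 ≤ ℓ := by rw [← hℓT]; positivity
  have part1 : ∀ p ∈ symanzikPoints G, p.1 + ∑ e, p.2 e = ℓ + 1 := by
    rintro p hp
    rcases hp with (⟨T', hT', rfl⟩ | ⟨T', i, hT', rfl⟩) | ⟨C, hC, rfl⟩
    · show 1 + ∑ e, indZ T'ᶜ e = ℓ + 1
      rw [sum_indZ, tree_compl_card G hconn hT']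
      ring
    · simp only [Pi.add_apply, Finset.sum_add_distrib, Finset.sum_pi_single',
        Finset.mem_univ, if_true]
      rw [sum_indZ, tree_compl_card G hconn hT']
      ring
    · show 0 + ∑ e, indZ C e = ℓ + 1
      rw [sum_indZ]
      have h1 := Finset.card_compl C
      have h2 := hC.1
      have h3 := Finset.card_le_univ C
      have h4 := hT.1
      have h5 := Finset.card_compl T
      have h6 := Finset.card_le_univ T
      omega
  have part2 : ∀ x : ℤ × (E → ℤ), x ∈ AddSubgroup.closure (symanzikPoints G) ↔
      (ℓ + 1) ∣ (x.1 + ∑ e, x.2 e) := by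
    intro x
    constructor
    · intro hx
      have hle : AddSubgroup.closure (symanzikPoints G) ≤
          AddSubgroup.comap sumHom (AddSubgroup.zmultiples (ℓ + 1)) := by
        rw [AddSubgroup.closure_le]
        intro p hp
        simp only [SetLike.mem_coe, AddSubgroup.mem_comap, Int.mem_zmultiples_iff,
          sumHom_apply]
        rw [part1 p hp]
      have := hle hx
      simp only [AddSubgroup.mem_comap, Int.mem_zmultiples_iff, sumHom_apply] at this
      exact this
    · intro hx
      obtain ⟨m, hm⟩ := hx
      have hu : ((1 : ℤ), indZ Tᶜ) ∈ AddSubgroup.closure (symanzikPoints G) :=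
        AddSubgroup.subset_closure (Or.inl (Or.inl ⟨T, hT, rfl⟩))
      have hw : ∀ i : E, ((-1 : ℤ), (Pi.single i 1 : E → ℤ)) ∈
          AddSubgroup.closure (symanzikPoints G) := by
        intro i
        have hmi : ((0 : ℤ), indZ Tᶜ + Pi.single i 1) ∈
            AddSubgroup.closure (symanzikPoints G) :=
          AddSubgroup.subset_closure (Or.inl (Or.inr ⟨T, i, hT, rfl⟩))
        have hsub := sub_mem hmi hu
        have heq : ((0 : ℤ), indZ Tᶜ + Pi.single i 1) - ((1 : ℤ), indZ Tᶜ) =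
            ((-1 : ℤ), (Pi.single i 1 : E → ℤ)) := by
          rw [Prod.mk_sub_mk]
          refine Prod.ext ?_ ?_ <;> simp
        rwa [heq] at hsub
      have hq : ((ℓ + 1 : ℤ), (0 : E → ℤ)) ∈ AddSubgroup.closure (symanzikPoints G) := by
        have hs : (∑ j ∈ Tᶜ, ((-1 : ℤ), (Pi.single j 1 : E → ℤ))) ∈
            AddSubgroup.closure (symanzikPoints G) := sum_mem (fun j _ => hw j)
        have hsub := sub_mem hu hs
        have heq : ((1 : ℤ), indZ Tᶜ) - (∑ j ∈ Tᶜ, ((-1 : ℤ), (Pi.single j 1 : E → ℤ)))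
            = ((ℓ + 1 : ℤ), (0 : E → ℤ)) := by
          refine Prod.ext ?_ ?_
          · simp only [Prod.fst_sub, Prod.fst_sum, Finset.sum_const, smul_eq_mul,
              mul_neg_one]
            rw [← hℓT]; ring
          · simp only [Prod.snd_sub, Prod.snd_sum]
            funext e
            simp only [Pi.sub_apply, Finset.sum_apply, Finset.sum_pi_single, indZ,
              Pi.zero_apply]
            split <;> simp
        rwa [heq] at hsub
      have hfinal : x = (∑ i, x.2 i • ((-1 : ℤ), (Pi.single i 1 : E → ℤ))) +
          m • ((ℓ + 1 : ℤ), (0 : E → ℤ)) := by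
        refine Prod.ext ?_ ?_
        · simp only [Prod.fst_add, Prod.fst_sum, Prod.smul_fst, smul_eq_mul, mul_neg_one,
            Finset.sum_neg_distrib]
          linear_combination hm
        · simp only [Prod.snd_add, Prod.snd_sum, Prod.smul_snd, smul_zero, add_zero]
          rw [show (∑ i, x.2 i • (Pi.single i 1 : E → ℤ)) = ∑ i, Pi.single i (x.2 i)
            from Finset.sum_congr rfl fun i _ => by rw [← Pi.single_smul, smul_eq_mul, mul_one]]
          rw [Finset.univ_sum_single]
      rw [hfinal]
      exact add_mem (sum_mem fun i _ => AddSubgroup.zsmul_mem _ (hw i) _)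
        (AddSubgroup.zsmul_mem _ hq m)
  refine ⟨part1, part2, ?_⟩
  have hsurj : Function.Surjective (sumHom (E := E)) := by
    intro n
    exact ⟨(n, 0), by simp [sumHom_apply]⟩
  have hset : AddSubgroup.closure (symanzikPoints G) =
      AddSubgroup.comap sumHom (AddSubgroup.zmultiples (ℓ + 1)) := by
    ext x
    rw [part2 x]
    simp [AddSubgroup.mem_comap, Int.mem_zmultiples_iff, sumHom_apply]
  rw [hset, AddSubgroup.index_comap_of_surjective _ hsurj, Int.index_zmultiples]
  omega
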